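/- Let 1 < p < ∞, let 0 < R < ∞, and let ω be analytic in a complex neighborhood of [0, R²]. If f is analytic in 𝔻_R and of class C¹ on the closed disc, then (R²/2)·∫₀^{2π} |f(Re^{iθ})|^p ω(R²) dθ − ∫_{𝔻_R} |z|² |f(z)|^p ω′(|z|²) dA(z) = ∫_{𝔻_R} ( (p/2)·z·f′(z) + f(z) ) · |f(z)|^{p−1} · conj(sgn f(z)) · ω(|z|²) dA(z). -/

import Mathlib

open MeasureTheory Real Set Filter Metric intervalIntegral

/-- The complex signum: `sgn w = w/|w|` for `w ≠ 0` and `sgn 0 = 0`. -/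
noncomputable def csgn (w : ℂ) : ℂ := if w = 0 then 0 else w / (‖w‖ : ℝ)

lemma CGW_norm_csgn_le_one (w : ℂ) : ‖csgn w‖ ≤ 1 := by
  unfold csgn
  split_ifs with h
  · simp
  · rw [norm_div]
    simp [h, norm_ne_zero_iff.2 h, le_refl]

lemma CGW_mul_conj_csgn (w : ℂ) : w * (starRingEnd ℂ) (csgn w) = (‖w‖ : ℂ) := by
  unfold csgn
  split_ifs with h
  · simp [h]
  · rw [map_div₀, Complex.conj_ofReal, mul_div_assoc', Complex.mul_conj]
    have h2 : (Complex.normSq w : ℂ) = (‖w‖ : ℂ) * ‖w‖ := by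
      rw [Complex.normSq_eq_norm_sq]
      push_cast
      ring
    rw [h2, mul_div_assoc]
    rw [div_self (by exact_mod_cast norm_ne_zero_iff.2 h), mul_one]

lemma CGW_hasDerivAt_norm_rpow {p : ℝ} (hp : 1 < p) {g : ℝ → ℂ} {d : ℂ} {t : ℝ}
    (hg : HasDerivAt g d t) :
    HasDerivAt (fun s => ‖g s‖ ^ p)
      (p * ‖g t‖ ^ (p - 1) * ((starRingEnd ℂ) (csgn (g t)) * d).re) t := by
  have hp0 : (0:ℝ) < p - 1 := by linarith
  rcases eq_or_ne (g t) 0 with h0 | h0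
  · -- zero case
    have hder0 : p * ‖g t‖ ^ (p - 1) * ((starRingEnd ℂ) (csgn (g t)) * d).re = 0 := by
      rw [h0]; simp [Real.zero_rpow (ne_of_gt hp0)]
    rw [hder0]
    rw [hasDerivAt_iff_isLittleO]
    simp only [h0, norm_zero, Real.zero_rpow (by positivity : p ≠ 0), smul_zero, sub_zero]
    have hBO : (fun s => g s) =O[nhds t] fun s => s - t := by
      simpa [h0] using hg.isBigO_sub
    obtain ⟨C, hC0, hC⟩ := hBO.exists_pos
    rw [Asymptotics.isBigOWith_iff] at hC
    have h1 : (fun s : ℝ => |s - t| ^ p) =o[nhds t] fun s => s - t := by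
      rw [Asymptotics.isLittleO_iff]
      intro ε hε
      have htend : Tendsto (fun s : ℝ => |s - t| ^ (p-1)) (nhds t) (nhds 0) := by
        have h2 : Tendsto (fun s : ℝ => |s - t|) (nhds t) (nhds 0) := by
          have hc : Continuous (fun s : ℝ => |s - t|) :=
            (continuous_id.sub continuous_const).abs
          have := hc.tendsto t
          simpa using this
        have h3 : ContinuousAt (fun x : ℝ => x ^ (p-1)) 0 :=
          Real.continuousAt_rpow_const 0 (p-1) (Or.inr hp0.le)
        have := h3.tendsto.comp h2
        simpa [Function.comp_def, Real.zero_rpow (ne_of_gt hp0)] using this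
      filter_upwards [htend.eventually (eventually_le_nhds hε)] with s hs
      have habs : |s - t| ^ p = |s - t| ^ (p-1) * |s - t| := by
        calc |s - t| ^ p = |s - t| ^ (p - 1 + 1) := by norm_num
          _ = |s - t| ^ (p - 1) * |s - t| ^ (1:ℝ) :=
              Real.rpow_add' (abs_nonneg _) (show p - 1 + 1 ≠ 0 by intro h; nlinarith)
          _ = |s - t| ^ (p - 1) * |s - t| := by rw [Real.rpow_one]
      rw [Real.norm_eq_abs, abs_of_nonneg (Real.rpow_nonneg (abs_nonneg _) _), habs]
      rw [Real.norm_eq_abs]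
      exact mul_le_mul_of_nonneg_right hs (abs_nonneg _)
    refine (Asymptotics.IsBigO.trans_isLittleO ?_ h1)
    rw [Asymptotics.isBigO_iff]
    refine ⟨C ^ p, ?_⟩
    filter_upwards [hC] with s hs
    rw [Real.norm_eq_abs, abs_of_nonneg (Real.rpow_nonneg (norm_nonneg _) _)]
    calc ‖g s‖ ^ p ≤ (C * ‖s - t‖) ^ p := by
          apply Real.rpow_le_rpow (norm_nonneg _) _ (by positivity)
          simpa using hs
      _ = C ^ p * ‖s - t‖ ^ p := Real.mul_rpow hC0.le (norm_nonneg _)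
      _ ≤ C ^ p * ‖|s - t| ^ p‖ := by
          rw [Real.norm_eq_abs (|s-t|^p), abs_of_nonneg (Real.rpow_nonneg (abs_nonneg _) _)]
          simp [Real.norm_eq_abs]
  · -- nonzero case
    have hgre : HasDerivAt (fun s => (g s).re) d.re t :=
      (Complex.reCLM.hasFDerivAt.comp_hasDerivAt t hg)
    have hgim : HasDerivAt (fun s => (g s).im) d.im t :=
      (Complex.imCLM.hasFDerivAt.comp_hasDerivAt t hg)
    have hnsq : HasDerivAt (fun s => Complex.normSq (g s))
        (2 * ((starRingEnd ℂ) (g t) * d).re) t := by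
      have := (hgre.mul hgre).add (hgim.mul hgim)
      refine (show HasDerivAt (fun s => Complex.normSq (g s)) _ t from this).congr_deriv ?_
      simp only [Complex.mul_re, Complex.conj_re, Complex.conj_im]; ring
    have hnsqne : Complex.normSq (g t) ≠ 0 := by
      simpa [Complex.normSq_eq_zero] using h0
    have hsqrt := (Real.hasDerivAt_sqrt hnsqne).comp t hnsq
    have hnormeq : ((fun x => Real.sqrt x) ∘ fun s => Complex.normSq (g s)) = fun s => ‖g s‖ := by
      funext s
      simp only [Function.comp_apply]
      rw [Complex.norm_def]
    rw [hnormeq] at hsqrt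
    have hnne : ‖g t‖ ≠ 0 := norm_ne_zero_iff.2 h0
    have hrpow := (Real.hasDerivAt_rpow_const (p := p) (Or.inl hnne)).comp t hsqrt
    have hrpow' : HasDerivAt (fun s => ‖g s‖ ^ p)
        (p * ‖g t‖ ^ (p - 1) * (1 / (2 * Real.sqrt (Complex.normSq (g t))) *
          (2 * ((starRingEnd ℂ) (g t) * d).re))) t := hrpow
    convert hrpow' using 1
    have hcs : csgn (g t) = g t / (‖g t‖ : ℂ) := by unfold csgn; simp [h0]
    rw [hcs, map_div₀]
    simp only [Complex.conj_ofReal]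
    rw [div_mul_eq_mul_div, Complex.div_ofReal_re]
    have habs : Real.sqrt (Complex.normSq (g t)) = ‖g t‖ := by
      rw [Complex.norm_def]
    rw [habs]
    field_simp

lemma CGW_rpow_split {p : ℝ} (hp : 1 < p) (x : ℝ) (hx : 0 ≤ x) :
    x ^ p = x ^ (p - 1) * x := by
  calc x ^ p = x ^ (p - 1 + 1) := by norm_num
    _ = x ^ (p - 1) * x ^ (1:ℝ) :=
        Real.rpow_add' hx (show p - 1 + 1 ≠ 0 by intro h; nlinarith)
    _ = x ^ (p - 1) * x := by rw [Real.rpow_one]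

lemma CGW_decomp {p : ℝ} (hp : 1 < p) (r ωv ω'v : ℝ) (hr : 0 ≤ r) (e u c : ℂ)
    (he : ‖e‖ = 1) :
    (r:ℝ) • ((((p:ℂ)/2) * ((r:ℂ)*e) * c + u) *
          (((‖u‖ ^ (p-1) : ℝ):ℂ) * (starRingEnd ℂ) (csgn u)) * ((ωv:ℝ):ℂ)
        + ((‖(r:ℂ)*e‖^2 * ‖u‖^p * ω'v : ℝ) : ℂ))
    = ((r * (‖u‖^p * ωv)
        + r^2/2 * (p * (((((‖u‖ ^ (p-1):ℝ):ℂ) * (starRingEnd ℂ) (csgn u)) * (e * c)).re)) * ωv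
        + r^2/2 * ‖u‖^p * (ω'v * (2*r)) : ℝ):ℂ)
      - Complex.I * (((r/2 * ((p * (((((‖u‖ ^ (p-1):ℝ):ℂ) * (starRingEnd ℂ) (csgn u)) *
            ((Complex.I * ((r:ℂ)*e)) * c)).re)) * ωv)) : ℝ) : ℂ) := by
  set a : ℝ := ‖u‖ ^ (p-1) with ha
  set K : ℂ := (starRingEnd ℂ) (csgn u) * (e * c) with hK
  have hnorm : ‖(r:ℂ)*e‖^2 = r^2 := by
    rw [norm_mul, he, mul_one, Complex.norm_real, Real.norm_eq_abs, sq_abs]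
  have hup : ‖u‖^p = a * ‖u‖ := CGW_rpow_split hp _ (norm_nonneg u)
  have huS : u * (((a:ℝ):ℂ) * (starRingEnd ℂ) (csgn u)) = ((a * ‖u‖ : ℝ) : ℂ) := by
    rw [mul_comm ((a:ℝ):ℂ), ← mul_assoc, CGW_mul_conj_csgn]
    push_cast; ring
  have h1 : (((p:ℂ)/2) * ((r:ℂ)*e) * c) * (((a:ℝ):ℂ) * (starRingEnd ℂ) (csgn u))
      = (((p/2*r*a : ℝ)):ℂ) * K := by
    rw [hK]; push_cast; ring
  have h2 : ((((a:ℝ):ℂ) * (starRingEnd ℂ) (csgn u)) * (e * c)) = ((a:ℝ):ℂ) * K := by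
    rw [hK]; ring
  have h3 : ((((a:ℝ):ℂ) * (starRingEnd ℂ) (csgn u)) * ((Complex.I * ((r:ℂ)*e)) * c))
      = ((a:ℝ):ℂ) * (Complex.I * (((r:ℝ):ℂ) * K)) := by
    rw [hK]; ring
  rw [hnorm, hup, add_mul, huS, h1, h2, h3]
  apply Complex.ext <;>
    simp [Complex.add_re, Complex.add_im, Complex.mul_re, Complex.mul_im, Complex.ofReal_re,
      Complex.ofReal_im, Complex.I_re, Complex.I_im, smul_eq_mul, ← Complex.ofReal_pow] <;> ring

lemma CGW_cont_norm_rpow {q : ℝ} (hq : 0 < q) : Continuous (fun w : ℂ => ‖w‖ ^ q) := by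
  rw [continuous_iff_continuousAt]
  intro w
  exact (Real.continuousAt_rpow_const _ _ (Or.inr hq.le)).comp continuous_norm.continuousAt

lemma CGW_S_cont {p : ℝ} (hp : 1 < p) :
    Continuous (fun w : ℂ => ((‖w‖ ^ (p-1) : ℝ):ℂ) * (starRingEnd ℂ) (csgn w)) := by
  have hp0 : (0:ℝ) < p - 1 := by linarith
  rw [continuous_iff_continuousAt]
  intro w
  rcases eq_or_ne w 0 with rfl | hw
  · -- at 0, squeeze
    have hval : ((‖(0:ℂ)‖ ^ (p-1) : ℝ):ℂ) * (starRingEnd ℂ) (csgn 0) = 0 := by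
      simp [csgn]
    rw [ContinuousAt, hval]
    have hb : ∀ x : ℂ, ‖((‖x‖ ^ (p-1) : ℝ):ℂ) * (starRingEnd ℂ) (csgn x)‖ ≤ ‖x‖ ^ (p-1) := by
      intro x
      rw [norm_mul, Complex.norm_real, Real.norm_eq_abs,
        abs_of_nonneg (Real.rpow_nonneg (norm_nonneg _) _), RingHomIsometric.norm_map]
      calc ‖x‖ ^ (p-1) * ‖csgn x‖ ≤ ‖x‖ ^ (p-1) * 1 := by
            apply mul_le_mul_of_nonneg_left _ (Real.rpow_nonneg (norm_nonneg _) _)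
            unfold csgn
            split_ifs with h
            · simp
            · rw [norm_div, Complex.norm_real, Real.norm_eq_abs,
                abs_of_nonneg (norm_nonneg _), div_self (norm_ne_zero_iff.2 h)]
        _ = ‖x‖ ^ (p-1) := mul_one _
    have htend : Tendsto (fun x : ℂ => ‖x‖ ^ (p-1)) (nhds 0) (nhds 0) := by
      have := (CGW_cont_norm_rpow hp0).tendsto (0:ℂ)
      simpa [Real.zero_rpow (ne_of_gt hp0)] using this
    exact squeeze_zero_norm hb htend
  · -- away from 0
    have hev : ∀ᶠ x in nhds w, ((‖x‖ ^ (p-1) : ℝ):ℂ) * (starRingEnd ℂ) (csgn x)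
        = ((‖x‖ ^ (p-1) : ℝ):ℂ) * (starRingEnd ℂ) (x / (‖x‖ : ℝ)) := by
      filter_upwards [isOpen_ne.mem_nhds (show w ≠ 0 from hw)] with x hx
      unfold csgn
      rw [if_neg hx]
    apply ContinuousAt.congr _ (hev.mono fun x hx => hx.symm)
    apply ContinuousAt.mul
    · exact Complex.continuous_ofReal.continuousAt.comp
        ((Real.continuousAt_rpow_const _ _ (Or.inr hp0.le)).comp continuous_norm.continuousAt)
    · apply Complex.continuous_conj.continuousAt.comp
      apply ContinuousAt.div
      · exact continuousAt_id
      · exact Complex.continuous_ofReal.continuousAt.comp continuous_norm.continuousAt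
      · exact_mod_cast norm_ne_zero_iff.2 hw

section Defs
variable (p : ℝ) (ω ω' : ℝ → ℝ) (f F : ℂ → ℂ)

noncomputable def CGW_S (w : ℂ) : ℂ := ((‖w‖ ^ (p-1) : ℝ):ℂ) * (starRingEnd ℂ) (csgn w)

noncomputable def CGW_zeta (r θ : ℝ) : ℂ := ((r:ℝ):ℂ) * Complex.exp ((θ:ℂ) * Complex.I)

noncomputable def CGW_G (z : ℂ) : ℂ :=
  (((p:ℂ)/2) * z * F z + f z) * CGW_S p (f z) * ((ω (‖z‖^2) : ℝ):ℂ)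

noncomputable def CGW_Gf (z : ℂ) : ℂ :=
  CGW_G p ω f F z + ((‖z‖^2 * ‖f z‖^p * ω' (‖z‖^2) : ℝ):ℂ)

noncomputable def CGW_A (r θ : ℝ) : ℝ :=
  r * (‖f (CGW_zeta r θ)‖^p * ω (r^2))
  + r^2/2 * (p * ((CGW_S p (f (CGW_zeta r θ))) *
      (Complex.exp ((θ:ℂ) * Complex.I) * F (CGW_zeta r θ))).re) * ω (r^2)
  + r^2/2 * ‖f (CGW_zeta r θ)‖^p * (ω' (r^2) * (2*r))

noncomputable def CGW_T (r θ : ℝ) : ℝ :=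
  r/2 * (p * ((CGW_S p (f (CGW_zeta r θ))) *
      ((Complex.I * CGW_zeta r θ) * F (CGW_zeta r θ))).re) * ω (r^2)

end Defs

lemma CGW_zeta_norm (r θ : ℝ) : ‖CGW_zeta r θ‖ = |r| := by
  unfold CGW_zeta
  rw [norm_mul, Complex.norm_exp_ofReal_mul_I,
    mul_one, Complex.norm_real, Real.norm_eq_abs]

lemma CGW_zeta_norm_sq {r : ℝ} (θ : ℝ) : ‖CGW_zeta r θ‖^2 = r^2 := by
  rw [CGW_zeta_norm, sq_abs]

lemma CGW_zeta_continuous : Continuous (fun q : ℝ × ℝ => CGW_zeta q.1 q.2) := by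
  unfold CGW_zeta
  exact (Complex.continuous_ofReal.comp continuous_fst).mul
    (Complex.continuous_exp.comp ((Complex.continuous_ofReal.comp continuous_snd).mul
      continuous_const))

lemma CGW_decomp' {p : ℝ} (hp : 1 < p) (ω ω' : ℝ → ℝ) (f F : ℂ → ℂ) {r : ℝ} (θ : ℝ)
    (hr : 0 ≤ r) :
    (r:ℝ) • CGW_Gf p ω ω' f F (CGW_zeta r θ)
      = ((CGW_A p ω ω' f F r θ : ℝ):ℂ) - Complex.I * ((CGW_T p ω f F r θ : ℝ):ℂ) := by
  have he : ‖Complex.exp ((θ:ℂ) * Complex.I)‖ = 1 := by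
    rw [Complex.norm_exp_ofReal_mul_I]
  have hz2 : ‖(((r:ℝ):ℂ) * Complex.exp ((θ:ℂ) * Complex.I))‖^2 = r^2 := CGW_zeta_norm_sq θ
  have key := CGW_decomp hp r (ω (r^2)) (ω' (r^2)) hr (Complex.exp ((θ:ℂ) * Complex.I))
    (f (CGW_zeta r θ)) (F (CGW_zeta r θ)) he
  unfold CGW_Gf CGW_G CGW_A CGW_T CGW_S CGW_zeta
  unfold CGW_zeta at key
  rw [hz2] at key
  rw [hz2, key]
  push_cast
  ring

lemma CGW_Gf_contOn {p R : ℝ} (hp : 1 < p) (hR : 0 < R) {ω ω' : ℝ → ℝ} {f F : ℂ → ℂ}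
    (hfc : ContinuousOn f (Metric.closedBall 0 R)) (hFc : ContinuousOn F (Metric.closedBall 0 R))
    (hωc : ContinuousOn ω (Icc 0 (R^2))) (hω'c : ContinuousOn ω' (Icc 0 (R^2))) :
    ContinuousOn (CGW_Gf p ω ω' f F) (Metric.closedBall 0 R) := by
  have hmaps : MapsTo (fun z : ℂ => ‖z‖^2) (Metric.closedBall 0 R) (Icc 0 (R^2)) := by
    intro z hz
    rw [Metric.mem_closedBall, dist_zero_right] at hz
    exact ⟨by positivity, by
      apply pow_le_pow_left₀ (norm_nonneg z) hz⟩
  have hsq : ContinuousOn (fun z : ℂ => ‖z‖^2) (Metric.closedBall 0 R) :=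
    (continuous_norm.pow 2).continuousOn
  have hωz : ContinuousOn (fun z : ℂ => ω (‖z‖^2)) (Metric.closedBall 0 R) :=
    hωc.comp hsq hmaps
  have hω'z : ContinuousOn (fun z : ℂ => ω' (‖z‖^2)) (Metric.closedBall 0 R) :=
    hω'c.comp hsq hmaps
  have hfp : ContinuousOn (fun z : ℂ => ‖f z‖^p) (Metric.closedBall 0 R) :=
    (CGW_cont_norm_rpow (by linarith : (0:ℝ) < p)).comp_continuousOn hfc
  have hSf : ContinuousOn (fun z : ℂ => CGW_S p (f z)) (Metric.closedBall 0 R) :=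
    (CGW_S_cont hp).comp_continuousOn hfc
  unfold CGW_Gf CGW_G
  apply ContinuousOn.add
  · exact (((continuousOn_const.mul continuousOn_id).mul hFc).add hfc).mul hSf |>.mul
      (Complex.continuous_ofReal.comp_continuousOn hωz)
  · exact Complex.continuous_ofReal.comp_continuousOn ((hsq.mul hfp).mul hω'z)

lemma CGW_A_contOn {p R : ℝ} (hp : 1 < p) (hR : 0 < R) {ω ω' : ℝ → ℝ} {f F : ℂ → ℂ}
    (hfc : ContinuousOn f (Metric.closedBall 0 R)) (hFc : ContinuousOn F (Metric.closedBall 0 R))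
    (hωc : ContinuousOn ω (Icc 0 (R^2))) (hω'c : ContinuousOn ω' (Icc 0 (R^2))) :
    ContinuousOn (fun q : ℝ × ℝ => CGW_A p ω ω' f F q.1 q.2)
      (Icc 0 R ×ˢ Icc (-π) π) := by
  have hmapζ : MapsTo (fun q : ℝ × ℝ => CGW_zeta q.1 q.2) (Icc 0 R ×ˢ Icc (-π) π)
      (Metric.closedBall 0 R) := by
    rintro ⟨r, θ⟩ ⟨hr, -⟩
    rw [Metric.mem_closedBall, dist_zero_right, CGW_zeta_norm, abs_of_nonneg hr.1]
    exact hr.2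
  have hmapsq : MapsTo (fun q : ℝ × ℝ => q.1^2) (Icc 0 R ×ˢ Icc (-π) π) (Icc 0 (R^2)) := by
    rintro ⟨r, θ⟩ ⟨hr, -⟩
    exact ⟨by positivity, pow_le_pow_left₀ hr.1 hr.2 2⟩
  have hfζ : ContinuousOn (fun q : ℝ × ℝ => f (CGW_zeta q.1 q.2)) (Icc 0 R ×ˢ Icc (-π) π) :=
    hfc.comp CGW_zeta_continuous.continuousOn hmapζ
  have hFζ : ContinuousOn (fun q : ℝ × ℝ => F (CGW_zeta q.1 q.2)) (Icc 0 R ×ˢ Icc (-π) π) :=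
    hFc.comp CGW_zeta_continuous.continuousOn hmapζ
  have hfp : ContinuousOn (fun q : ℝ × ℝ => ‖f (CGW_zeta q.1 q.2)‖^p) (Icc 0 R ×ˢ Icc (-π) π) :=
    (CGW_cont_norm_rpow (by linarith : (0:ℝ) < p)).comp_continuousOn hfζ
  have hSζ : ContinuousOn (fun q : ℝ × ℝ => CGW_S p (f (CGW_zeta q.1 q.2)))
      (Icc 0 R ×ˢ Icc (-π) π) := (CGW_S_cont hp).comp_continuousOn hfζ
  have hωq : ContinuousOn (fun q : ℝ × ℝ => ω (q.1^2)) (Icc 0 R ×ˢ Icc (-π) π) :=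
    hωc.comp ((continuous_fst.pow 2).continuousOn) hmapsq
  have hω'q : ContinuousOn (fun q : ℝ × ℝ => ω' (q.1^2)) (Icc 0 R ×ˢ Icc (-π) π) :=
    hω'c.comp ((continuous_fst.pow 2).continuousOn) hmapsq
  have hexp : Continuous (fun q : ℝ × ℝ => Complex.exp ((q.2:ℂ) * Complex.I)) :=
    Complex.continuous_exp.comp ((Complex.continuous_ofReal.comp continuous_snd).mul
      continuous_const)
  unfold CGW_A
  apply ContinuousOn.add
  apply ContinuousOn.add
  · exact continuous_fst.continuousOn.mul (hfp.mul hωq)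
  · exact ((((continuous_fst.pow 2).continuousOn.div_const 2).mul
      (continuousOn_const.mul (Complex.continuous_re.comp_continuousOn
        (hSζ.mul (hexp.continuousOn.mul hFζ))))).mul hωq)
  · exact ((continuous_fst.pow 2).continuousOn.div_const 2).mul hfp |>.mul
      (hω'q.mul ((continuous_const.mul continuous_fst).continuousOn))

lemma CGW_V_hasDeriv {p R : ℝ} (hp : 1 < p) (hR : 0 < R) {ω ω' : ℝ → ℝ} {f F : ℂ → ℂ}
    (hfd : ∀ z ∈ Metric.ball (0:ℂ) R, HasDerivAt f (F z) z)
    (hωd : ∀ x ∈ Icc 0 (R^2), HasDerivAt ω (ω' x) x)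
    (θ : ℝ) {r : ℝ} (hr : r ∈ Ioo 0 R) :
    HasDerivAt (fun s : ℝ => s^2/2 * (‖f (CGW_zeta s θ)‖^p * ω (s^2)))
      (CGW_A p ω ω' f F r θ) r := by
  have hz : CGW_zeta r θ ∈ Metric.ball (0:ℂ) R := by
    rw [Metric.mem_ball, dist_zero_right, CGW_zeta_norm, abs_of_nonneg hr.1.le]
    exact hr.2
  have h1 : HasDerivAt (fun s : ℝ => CGW_zeta s θ) (Complex.exp ((θ:ℂ) * Complex.I)) r := by
    simpa [CGW_zeta] using
      (Complex.ofRealCLM.hasFDerivAt.hasDerivAt (x := r)).mul_const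
        (Complex.exp ((θ:ℂ) * Complex.I))
  have h2 : HasDerivAt (fun s : ℝ => f (CGW_zeta s θ))
      (Complex.exp ((θ:ℂ) * Complex.I) • F (CGW_zeta r θ)) r :=
    (hfd _ hz).scomp r h1
  have h3 := CGW_hasDerivAt_norm_rpow hp h2
  have hx : r^2 ∈ Icc 0 (R^2) := ⟨by positivity, by
    apply pow_le_pow_left₀ hr.1.le hr.2.le⟩
  have hpow : HasDerivAt (fun s : ℝ => s^2) (2*r) r := by
    simpa using hasDerivAt_pow 2 r
  have h4' := HasDerivAt.comp_of_eq (x := r) (hωd _ hx) hpow rfl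
  have h4 : HasDerivAt (fun s : ℝ => ω (s^2)) (ω' (r^2) * (2*r)) r := h4'
  have h5 : HasDerivAt (fun s : ℝ => s^2/2) r r := by
    simpa using (hasDerivAt_pow 2 r).div_const 2
  have htot := h5.mul (h3.mul h4)
  refine htot.congr_deriv ?_
  unfold CGW_A CGW_S
  rw [mul_assoc ((‖f (CGW_zeta r θ)‖ ^ (p-1) : ℝ):ℂ), Complex.re_ofReal_mul]
  simp only [smul_eq_mul, Pi.mul_apply]
  ring

lemma CGW_U_hasDeriv {p R : ℝ} (hp : 1 < p) (hR : 0 < R) {ω : ℝ → ℝ} {f F : ℂ → ℂ}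
    (hfd : ∀ z ∈ Metric.ball (0:ℂ) R, HasDerivAt f (F z) z)
    {r : ℝ} (hr : r ∈ Ioo 0 R) (θ : ℝ) :
    HasDerivAt (fun t : ℝ => r/2 * (‖f (CGW_zeta r t)‖^p * ω (r^2)))
      (CGW_T p ω f F r θ) θ := by
  have hz : CGW_zeta r θ ∈ Metric.ball (0:ℂ) R := by
    rw [Metric.mem_ball, dist_zero_right, CGW_zeta_norm, abs_of_nonneg hr.1.le]
    exact hr.2
  have hc1 : HasDerivAt (fun t : ℝ => (t:ℂ) * Complex.I) Complex.I θ := by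
    simpa using (Complex.ofRealCLM.hasFDerivAt.hasDerivAt (x := θ)).mul_const Complex.I
  have hc2 : HasDerivAt (fun t : ℝ => Complex.exp ((t:ℂ) * Complex.I))
      (Complex.exp ((θ:ℂ) * Complex.I) * Complex.I) θ := hc1.cexp
  have hc3 : HasDerivAt (fun t : ℝ => CGW_zeta r t)
      (((r:ℝ):ℂ) * (Complex.exp ((θ:ℂ) * Complex.I) * Complex.I)) θ := by
    unfold CGW_zeta
    exact hc2.const_mul _
  have h2 : HasDerivAt (fun t : ℝ => f (CGW_zeta r t))
      ((((r:ℝ):ℂ) * (Complex.exp ((θ:ℂ) * Complex.I) * Complex.I)) • F (CGW_zeta r θ)) θ :=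
    (hfd _ hz).scomp θ hc3
  have h3 := CGW_hasDerivAt_norm_rpow hp h2
  have htot := (h3.mul_const (ω (r^2))).const_mul (r/2)
  refine htot.congr_deriv ?_
  unfold CGW_T CGW_S
  rw [mul_assoc ((‖f (CGW_zeta r θ)‖ ^ (p-1) : ℝ):ℂ), Complex.re_ofReal_mul]
  have harg : (starRingEnd ℂ) (csgn (f (CGW_zeta r θ))) *
        ((Complex.I * CGW_zeta r θ) * F (CGW_zeta r θ))
      = (starRingEnd ℂ) (csgn (f (CGW_zeta r θ))) *
        ((((r:ℝ):ℂ) * (Complex.exp ((θ:ℂ) * Complex.I) * Complex.I)) • F (CGW_zeta r θ)) := by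
    simp only [smul_eq_mul]
    unfold CGW_zeta
    ring
  rw [harg]
  ring

lemma CGW_T_contOn {p R : ℝ} (hp : 1 < p) (hR : 0 < R) {ω : ℝ → ℝ} {f F : ℂ → ℂ}
    (hfc : ContinuousOn f (Metric.closedBall 0 R)) (hFc : ContinuousOn F (Metric.closedBall 0 R))
    (hωc : ContinuousOn ω (Icc 0 (R^2))) :
    ContinuousOn (fun q : ℝ × ℝ => CGW_T p ω f F q.1 q.2)
      (Icc 0 R ×ˢ Icc (-π) π) := by
  have hmapζ : MapsTo (fun q : ℝ × ℝ => CGW_zeta q.1 q.2) (Icc 0 R ×ˢ Icc (-π) π)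
      (Metric.closedBall 0 R) := by
    rintro ⟨r, θ⟩ ⟨hr, -⟩
    rw [Metric.mem_closedBall, dist_zero_right, CGW_zeta_norm, abs_of_nonneg hr.1]
    exact hr.2
  have hmapsq : MapsTo (fun q : ℝ × ℝ => q.1^2) (Icc 0 R ×ˢ Icc (-π) π) (Icc 0 (R^2)) := by
    rintro ⟨r, θ⟩ ⟨hr, -⟩
    exact ⟨by positivity, pow_le_pow_left₀ hr.1 hr.2 2⟩
  have hfζ : ContinuousOn (fun q : ℝ × ℝ => f (CGW_zeta q.1 q.2)) (Icc 0 R ×ˢ Icc (-π) π) :=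
    hfc.comp CGW_zeta_continuous.continuousOn hmapζ
  have hFζ : ContinuousOn (fun q : ℝ × ℝ => F (CGW_zeta q.1 q.2)) (Icc 0 R ×ˢ Icc (-π) π) :=
    hFc.comp CGW_zeta_continuous.continuousOn hmapζ
  have hSζ : ContinuousOn (fun q : ℝ × ℝ => CGW_S p (f (CGW_zeta q.1 q.2)))
      (Icc 0 R ×ˢ Icc (-π) π) := (CGW_S_cont hp).comp_continuousOn hfζ
  have hωq : ContinuousOn (fun q : ℝ × ℝ => ω (q.1^2)) (Icc 0 R ×ˢ Icc (-π) π) :=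
    hωc.comp ((continuous_fst.pow 2).continuousOn) hmapsq
  unfold CGW_T
  exact ((continuous_fst.continuousOn.div_const 2).mul
    (continuousOn_const.mul (Complex.continuous_re.comp_continuousOn
      (hSζ.mul (((continuous_const.mul CGW_zeta_continuous).continuousOn).mul hFζ))))).mul hωq

/-- The Cauchy–Green identity for `|f|^p` against the weight `ω(|z|²)`:
`(R²/2)∫₀^{2π}|f(Re^{iθ})|^p ω(R²)dθ − ∫_{𝔻_R}|z|²|f(z)|^p ω′(|z|²)dA
  = ∫_{𝔻_R}((p/2)zf′(z) + f(z))|f(z)|^{p−1} conj(sgn f(z)) ω(|z|²) dA`. -/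
theorem cauchy_green_identity_weighted
    (p R : ℝ) (hp : 1 < p) (hR : 0 < R)
    (ω : ℝ → ℝ)
    (hωan : AnalyticOnNhd ℝ ω (Set.Icc 0 (R ^ 2)))
    (f : ℂ → ℂ)
    (hf : DifferentiableOn ℂ f (Metric.ball 0 R))
    (hf1 : ContDiffOn ℝ 1 f (Metric.closedBall 0 R)) :
    ((R ^ 2 / 2 *
        (∫ θ in (0 : ℝ)..(2 * Real.pi),
          ‖f ((R : ℂ) * Complex.exp ((θ : ℂ) * Complex.I))‖ ^ p * ω (R ^ 2))
      - ∫ z in Metric.ball (0 : ℂ) R, ‖z‖ ^ 2 * ‖f z‖ ^ p * deriv ω (‖z‖ ^ 2) : ℝ) : ℂ)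
    = ∫ z in Metric.ball (0 : ℂ) R,
        (((p : ℂ) / 2) * z * deriv f z + f z) * ((‖f z‖ ^ (p - 1) : ℝ) : ℂ) *
          (starRingEnd ℂ) (csgn (f z)) * ((ω (‖z‖ ^ 2) : ℝ) : ℂ) := by
  have hπ : (0:ℝ) < π := Real.pi_pos
  have hp0 : (0:ℝ) < p := by linarith
  set ω' : ℝ → ℝ := deriv ω with hω'def
  set F : ℂ → ℂ := fun z => fderivWithin ℝ f (Metric.closedBall (0:ℂ) R) z 1 with hFdef
  -- basic facts
  have hUD : UniqueDiffOn ℝ (Metric.closedBall (0:ℂ) R) := by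
    apply uniqueDiffOn_convex (convex_closedBall _ _)
    rw [interior_closedBall _ (ne_of_gt hR)]
    exact ⟨0, Metric.mem_ball_self hR⟩
  have hfc : ContinuousOn f (Metric.closedBall (0:ℂ) R) := hf1.continuousOn
  have hFc : ContinuousOn F (Metric.closedBall (0:ℂ) R) := by
    rw [hFdef]
    exact (hf1.continuousOn_fderivWithin hUD le_rfl).clm_apply continuousOn_const
  have hFeq : ∀ z ∈ Metric.ball (0:ℂ) R, F z = deriv f z := by
    intro z hz
    have hdz : DifferentiableAt ℂ f z := hf.differentiableAt (isOpen_ball.mem_nhds hz)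
    have h2 : fderivWithin ℝ f (Metric.closedBall (0:ℂ) R) z = fderiv ℝ f z :=
      fderivWithin_of_mem_nhds
        (Filter.mem_of_superset (isOpen_ball.mem_nhds hz) Metric.ball_subset_closedBall)
    show fderivWithin ℝ f (Metric.closedBall (0:ℂ) R) z 1 = deriv f z
    rw [h2, (hdz.hasFDerivAt.restrictScalars ℝ).fderiv]
    rfl
  have hfd : ∀ z ∈ Metric.ball (0:ℂ) R, HasDerivAt f (F z) z := by
    intro z hz
    rw [hFeq z hz]
    exact (hf.differentiableAt (isOpen_ball.mem_nhds hz)).hasDerivAt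
  have hωc : ContinuousOn ω (Icc 0 (R^2)) := hωan.continuousOn
  have hω'c : ContinuousOn ω' (Icc 0 (R^2)) := hωan.deriv.continuousOn
  have hωd : ∀ x ∈ Icc 0 (R^2), HasDerivAt ω (ω' x) x := fun x hx =>
    ((hωan x hx).differentiableAt).hasDerivAt
  -- continuity of the various integrands
  have hGfc := CGW_Gf_contOn hp hR hfc hFc hωc hω'c
  have hAc := CGW_A_contOn hp hR hfc hFc hωc hω'c
  have hTc := CGW_T_contOn hp hR hfc hFc hωc
  have hmaps : MapsTo (fun z : ℂ => ‖z‖^2) (Metric.closedBall (0:ℂ) R) (Icc 0 (R^2)) := by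
    intro z hz
    rw [Metric.mem_closedBall, dist_zero_right] at hz
    exact ⟨by positivity, pow_le_pow_left₀ (norm_nonneg z) hz 2⟩
  have hcorrc : ContinuousOn (fun z : ℂ => ((‖z‖^2 * ‖f z‖^p * ω' (‖z‖^2) : ℝ):ℂ))
      (Metric.closedBall (0:ℂ) R) := by
    apply Complex.continuous_ofReal.comp_continuousOn
    exact ((continuous_norm.pow 2).continuousOn.mul
      ((CGW_cont_norm_rpow hp0).comp_continuousOn hfc)).mul
      (hω'c.comp (continuous_norm.pow 2).continuousOn hmaps)
  have hGc : ContinuousOn (CGW_G p ω f F) (Metric.closedBall (0:ℂ) R) := by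
    have hGeq : CGW_G p ω f F = fun z =>
        CGW_Gf p ω ω' f F z - ((‖z‖^2 * ‖f z‖^p * ω' (‖z‖^2) : ℝ):ℂ) := by
      funext z
      unfold CGW_Gf
      ring
    rw [hGeq]
    exact hGfc.sub hcorrc
  have hmapζ : MapsTo (fun q : ℝ × ℝ => CGW_zeta q.1 q.2) (Icc 0 R ×ˢ Icc (-π) π)
      (Metric.closedBall (0:ℂ) R) := by
    rintro ⟨r, θ⟩ ⟨hr, -⟩
    rw [Metric.mem_closedBall, dist_zero_right, CGW_zeta_norm, abs_of_nonneg hr.1]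
    exact hr.2
  -- step 1 : rewrite the right-hand side integrand
  have hstep1 : (∫ z in Metric.ball (0:ℂ) R,
        (((p : ℂ) / 2) * z * deriv f z + f z) * ((‖f z‖ ^ (p - 1) : ℝ) : ℂ) *
          (starRingEnd ℂ) (csgn (f z)) * ((ω (‖z‖ ^ 2) : ℝ) : ℂ))
      = ∫ z in Metric.ball (0:ℂ) R, CGW_G p ω f F z := by
    apply setIntegral_congr_fun measurableSet_ball
    intro z hz
    unfold CGW_G CGW_S
    rw [hFeq z hz]
    ring
  -- integrability on the ball
  have hGint : IntegrableOn (CGW_G p ω f F) (Metric.ball (0:ℂ) R) :=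
    (hGc.integrableOn_compact (isCompact_closedBall _ _)).mono_set
      Metric.ball_subset_closedBall
  have hcorrint : IntegrableOn (fun z : ℂ => ((‖z‖^2 * ‖f z‖^p * ω' (‖z‖^2) : ℝ):ℂ))
      (Metric.ball (0:ℂ) R) :=
    (hcorrc.integrableOn_compact (isCompact_closedBall _ _)).mono_set
      Metric.ball_subset_closedBall
  -- the main computation
  have hmain : (∫ z in Metric.ball (0:ℂ) R, CGW_Gf p ω ω' f F z)
      = ((R ^ 2 / 2 *
        (∫ θ in (0 : ℝ)..(2 * Real.pi),
          ‖f ((R : ℂ) * Complex.exp ((θ : ℂ) * Complex.I))‖ ^ p * ω (R ^ 2)) : ℝ) : ℂ) := by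
    have tmeas : MeasurableSet polarCoord.target := by
      rw [polarCoord_target]
      exact measurableSet_Ioi.prod measurableSet_Ioo
    have hsubmeas : MeasurableSet (Ioo (0:ℝ) R ×ˢ Ioo (-π) π) :=
      measurableSet_Ioo.prod measurableSet_Ioo
    have hsub : Ioo (0:ℝ) R ×ˢ Ioo (-π) π ⊆ polarCoord.target := by
      rw [polarCoord_target]
      exact Set.prod_mono Set.Ioo_subset_Ioi_self subset_rfl
    -- (C1) polar coordinates
    have hC1 : (∫ z in Metric.ball (0:ℂ) R, CGW_Gf p ω ω' f F z)
        = ∫ q in Ioo (0:ℝ) R ×ˢ Ioo (-π) π,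
            q.1 • CGW_Gf p ω ω' f F (CGW_zeta q.1 q.2) := by
      have hpol := Complex.integral_comp_polarCoord_symm
        (Set.indicator (Metric.ball (0:ℂ) R) (CGW_Gf p ω ω' f F))
      rw [MeasureTheory.integral_indicator measurableSet_ball] at hpol
      rw [← hpol]
      have h1 : ∀ q ∈ polarCoord.target,
          q.1 • Set.indicator (Metric.ball (0:ℂ) R) (CGW_Gf p ω ω' f F)
            (Complex.polarCoord.symm q)
          = Set.indicator (Ioo (0:ℝ) R ×ˢ Ioo (-π) π)
              (fun q : ℝ × ℝ => q.1 • CGW_Gf p ω ω' f F (CGW_zeta q.1 q.2)) q := by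
        rintro ⟨r, θ⟩ hq
        rw [polarCoord_target] at hq
        obtain ⟨hr, hθ⟩ := hq
        have hsymm : Complex.polarCoord.symm (r, θ) = CGW_zeta r θ := by
          rw [Complex.polarCoord_symm_apply]
          unfold CGW_zeta
          rw [Complex.exp_mul_I]
          push_cast
          ring
        rw [hsymm]
        by_cases hlt : r < R
        · have hmem1 : CGW_zeta r θ ∈ Metric.ball (0:ℂ) R := by
            rw [Metric.mem_ball, dist_zero_right, CGW_zeta_norm, abs_of_pos hr]
            exact hlt
          have hmem2 : ((r, θ) : ℝ × ℝ) ∈ Ioo (0:ℝ) R ×ˢ Ioo (-π) π :=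
            Set.mk_mem_prod ⟨hr, hlt⟩ hθ
          rw [Set.indicator_of_mem hmem1, Set.indicator_of_mem hmem2]
        · have hmem1 : CGW_zeta r θ ∉ Metric.ball (0:ℂ) R := by
            rw [Metric.mem_ball, dist_zero_right, CGW_zeta_norm, abs_of_pos hr]
            exact hlt
          have hmem2 : ((r, θ) : ℝ × ℝ) ∉ Ioo (0:ℝ) R ×ˢ Ioo (-π) π := by
            rintro ⟨⟨-, h⟩, -⟩
            exact hlt h
          rw [Set.indicator_of_notMem hmem1, Set.indicator_of_notMem hmem2, smul_zero]
      rw [setIntegral_congr_fun tmeas h1, setIntegral_indicator hsubmeas,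
        Set.inter_eq_self_of_subset_right hsub]
    -- integrability of the polar integrand
    have hΦc : ContinuousOn (fun q : ℝ × ℝ => q.1 • CGW_Gf p ω ω' f F (CGW_zeta q.1 q.2))
        (Icc 0 R ×ˢ Icc (-π) π) :=
      (continuous_fst.continuousOn).smul (hGfc.comp CGW_zeta_continuous.continuousOn hmapζ)
    have hΦint : IntegrableOn (fun q : ℝ × ℝ => q.1 • CGW_Gf p ω ω' f F (CGW_zeta q.1 q.2))
        (Ioo (0:ℝ) R ×ˢ Ioo (-π) π) volume :=
      (hΦc.integrableOn_compact (isCompact_Icc.prod isCompact_Icc)).mono_set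
        (Set.prod_mono Set.Ioo_subset_Icc_self Set.Ioo_subset_Icc_self)
    -- (C2) Fubini
    have hC2 : (∫ q in Ioo (0:ℝ) R ×ˢ Ioo (-π) π,
            q.1 • CGW_Gf p ω ω' f F (CGW_zeta q.1 q.2))
        = ∫ r in Ioo (0:ℝ) R, ∫ θ in Ioo (-π) π,
            (r:ℝ) • CGW_Gf p ω ω' f F (CGW_zeta r θ) := by
      rw [Measure.volume_eq_prod]
      apply setIntegral_prod
      rwa [← Measure.volume_eq_prod]
    -- product integrability of A
    have hAint : IntegrableOn (fun q : ℝ × ℝ => CGW_A p ω ω' f F q.1 q.2)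
        (Ioo (0:ℝ) R ×ˢ Ioo (-π) π) volume :=
      (hAc.integrableOn_compact (isCompact_Icc.prod isCompact_Icc)).mono_set
        (Set.prod_mono Set.Ioo_subset_Icc_self Set.Ioo_subset_Icc_self)
    have hofR : ∀ {μ : Measure ℝ} (g : ℝ → ℝ),
        (∫ x, ((g x : ℝ):ℂ) ∂μ) = ((∫ x, g x ∂μ : ℝ):ℂ) := fun g => _root_.integral_ofReal
    -- (C3) inner integral computation
    have hC3 : ∀ r ∈ Ioo (0:ℝ) R,
        (∫ θ in Ioo (-π) π, (r:ℝ) • CGW_Gf p ω ω' f F (CGW_zeta r θ))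
        = ((∫ θ in Ioo (-π) π, CGW_A p ω ω' f F r θ : ℝ) : ℂ) := by
      intro r hr
      have hrIcc : r ∈ Icc (0:ℝ) R := ⟨hr.1.le, hr.2.le⟩
      have hAslice : ContinuousOn (fun θ => CGW_A p ω ω' f F r θ) (Icc (-π) π) :=
        hAc.comp (Continuous.continuousOn (continuous_const.prodMk continuous_id))
          (fun θ hθ => Set.mk_mem_prod hrIcc hθ)
      have hTslice : ContinuousOn (fun θ => CGW_T p ω f F r θ) (Icc (-π) π) :=
        hTc.comp (Continuous.continuousOn (continuous_const.prodMk continuous_id))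
          (fun θ hθ => Set.mk_mem_prod hrIcc hθ)
      have hAsliceInt : IntegrableOn (fun θ => CGW_A p ω ω' f F r θ) (Ioo (-π) π) :=
        (hAslice.integrableOn_compact isCompact_Icc).mono_set Set.Ioo_subset_Icc_self
      have hTsliceInt : IntegrableOn (fun θ => CGW_T p ω f F r θ) (Ioo (-π) π) :=
        (hTslice.integrableOn_compact isCompact_Icc).mono_set Set.Ioo_subset_Icc_self
      have hTzero : (∫ θ in Ioo (-π) π, CGW_T p ω f F r θ) = 0 := by
        rw [← integral_Ioc_eq_integral_Ioo,
          ← intervalIntegral.integral_of_le (by linarith : -π ≤ π)]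
        have hTint : IntervalIntegrable (fun θ => CGW_T p ω f F r θ) volume (-π) π := by
          apply ContinuousOn.intervalIntegrable
          rwa [Set.uIcc_of_le (by linarith : -π ≤ π)]
        rw [intervalIntegral.integral_eq_sub_of_hasDerivAt
          (fun θ _ => CGW_U_hasDeriv hp hR hfd hr θ) hTint]
        have hζeq : CGW_zeta r π = CGW_zeta r (-π) := by
          unfold CGW_zeta
          push_cast
          rw [neg_mul, Complex.exp_neg, Complex.exp_pi_mul_I]
          norm_num
        rw [hζeq, sub_self]
      calc (∫ θ in Ioo (-π) π, (r:ℝ) • CGW_Gf p ω ω' f F (CGW_zeta r θ))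
          = ∫ θ in Ioo (-π) π, (((CGW_A p ω ω' f F r θ : ℝ):ℂ)
              - Complex.I * ((CGW_T p ω f F r θ : ℝ):ℂ)) :=
            setIntegral_congr_fun measurableSet_Ioo
              (fun θ _ => CGW_decomp' hp ω ω' f F θ hr.1.le)
        _ = (∫ θ in Ioo (-π) π, ((CGW_A p ω ω' f F r θ : ℝ):ℂ))
              - ∫ θ in Ioo (-π) π, Complex.I * ((CGW_T p ω f F r θ : ℝ):ℂ) :=
            integral_sub hAsliceInt.ofReal (hTsliceInt.ofReal.const_mul Complex.I)
        _ = ((∫ θ in Ioo (-π) π, CGW_A p ω ω' f F r θ : ℝ):ℂ)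
              - Complex.I * ((∫ θ in Ioo (-π) π, CGW_T p ω f F r θ : ℝ):ℂ) := by
            rw [MeasureTheory.integral_const_mul, hofR, hofR]
        _ = ((∫ θ in Ioo (-π) π, CGW_A p ω ω' f F r θ : ℝ):ℂ) := by
            rw [hTzero]
            simp
    have hC3' : (∫ r in Ioo (0:ℝ) R, ∫ θ in Ioo (-π) π,
          (r:ℝ) • CGW_Gf p ω ω' f F (CGW_zeta r θ))
        = ∫ r in Ioo (0:ℝ) R, ((∫ θ in Ioo (-π) π, CGW_A p ω ω' f F r θ : ℝ):ℂ) :=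
      setIntegral_congr_fun measurableSet_Ioo (fun r hr => hC3 r hr)
    have hC4 : (∫ r in Ioo (0:ℝ) R, ((∫ θ in Ioo (-π) π, CGW_A p ω ω' f F r θ : ℝ):ℂ))
        = ((∫ r in Ioo (0:ℝ) R, ∫ θ in Ioo (-π) π, CGW_A p ω ω' f F r θ : ℝ):ℂ) :=
      integral_ofReal
    -- (C5) swapping the two integrals
    have hC5 : (∫ r in Ioo (0:ℝ) R, ∫ θ in Ioo (-π) π, CGW_A p ω ω' f F r θ)
        = ∫ θ in Ioo (-π) π, ∫ r in Ioo (0:ℝ) R, CGW_A p ω ω' f F r θ := by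
      apply integral_integral_swap
      rw [Measure.prod_restrict, ← Measure.volume_eq_prod]
      exact hAint
    -- (C6) the radial FTC
    have hC6 : ∀ θ ∈ Ioo (-π) π, (∫ r in Ioo (0:ℝ) R, CGW_A p ω ω' f F r θ)
        = R^2/2 * (‖f (CGW_zeta R θ)‖^p * ω (R^2)) := by
      intro θ hθ
      have hθIcc : θ ∈ Icc (-π) π := ⟨hθ.1.le, hθ.2.le⟩
      have hζsc : ContinuousOn (fun s : ℝ => CGW_zeta s θ) (Icc 0 R) :=
        (CGW_zeta_continuous.comp (continuous_id.prodMk continuous_const)).continuousOn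
      have hmapsζ : MapsTo (fun s : ℝ => CGW_zeta s θ) (Icc 0 R)
          (Metric.closedBall (0:ℂ) R) := by
        intro s hs
        rw [Metric.mem_closedBall, dist_zero_right, CGW_zeta_norm, abs_of_nonneg hs.1]
        exact hs.2
      have hmapsq : MapsTo (fun s : ℝ => s^2) (Icc 0 R) (Icc 0 (R^2)) := fun s hs =>
        ⟨by positivity, pow_le_pow_left₀ hs.1 hs.2 2⟩
      have hfs : ContinuousOn (fun s : ℝ => f (CGW_zeta s θ)) (Icc 0 R) :=
        hfc.comp hζsc hmapsζ
      have hVc : ContinuousOn (fun s : ℝ => s^2/2 * (‖f (CGW_zeta s θ)‖^p * ω (s^2)))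
          (Icc 0 R) := by
        apply ContinuousOn.mul
        · exact ((continuous_pow 2).continuousOn.div_const 2)
        · exact ((CGW_cont_norm_rpow hp0).comp_continuousOn hfs).mul
            (hωc.comp ((continuous_pow 2).continuousOn) hmapsq)
      have hAr : ContinuousOn (fun s => CGW_A p ω ω' f F s θ) (Icc 0 R) :=
        hAc.comp (Continuous.continuousOn (continuous_id.prodMk continuous_const))
          (fun s hs => Set.mk_mem_prod hs hθIcc)
      have hArInt : IntervalIntegrable (fun s => CGW_A p ω ω' f F s θ) volume 0 R := by
        apply ContinuousOn.intervalIntegrable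
        rwa [Set.uIcc_of_le hR.le]
      have hftc := intervalIntegral.integral_eq_sub_of_hasDeriv_right_of_le hR.le hVc
        (fun s hs => (CGW_V_hasDeriv hp hR hfd hωd θ hs).hasDerivWithinAt) hArInt
      rw [← integral_Ioc_eq_integral_Ioo, ← intervalIntegral.integral_of_le hR.le, hftc]
      norm_num
    have hC6' : (∫ θ in Ioo (-π) π, ∫ r in Ioo (0:ℝ) R, CGW_A p ω ω' f F r θ)
        = ∫ θ in Ioo (-π) π, R^2/2 * (‖f (CGW_zeta R θ)‖^p * ω (R^2)) :=
      setIntegral_congr_fun measurableSet_Ioo hC6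
    -- (C7) periodicity
    have hC7 : (∫ θ in Ioo (-π) π, R^2/2 * (‖f (CGW_zeta R θ)‖^p * ω (R^2)))
        = R ^ 2 / 2 * (∫ θ in (0:ℝ)..(2 * Real.pi),
            ‖f ((R : ℂ) * Complex.exp ((θ : ℂ) * Complex.I))‖ ^ p * ω (R ^ 2)) := by
      rw [← integral_Ioc_eq_integral_Ioo,
        ← intervalIntegral.integral_of_le (by linarith : -π ≤ π)]
      have heq : (fun θ : ℝ => R^2/2 * (‖f (CGW_zeta R θ)‖^p * ω (R^2)))
          = fun θ : ℝ => R^2/2 * (‖f ((R : ℂ) * Complex.exp ((θ:ℂ) * Complex.I))‖^p * ω (R^2)) := by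
        funext θ
        rfl
      rw [heq, intervalIntegral.integral_const_mul]
      congr 1
      have hper : Function.Periodic
          (fun θ : ℝ => ‖f ((R : ℂ) * Complex.exp ((θ:ℂ) * Complex.I))‖^p * ω (R^2))
          (2*π) := by
        intro θ
        have hexp : (((θ + 2*π : ℝ)):ℂ) * Complex.I = (θ:ℂ) * Complex.I + 2*π*Complex.I := by
          push_cast
          ring
        simp only [hexp, Complex.exp_add, Complex.exp_two_pi_mul_I, mul_one]
      have hshift := hper.intervalIntegral_add_eq (-π) 0
      rw [zero_add, show -π + 2*π = π from by ring] at hshift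
      rw [hshift]
    rw [hC1, hC2, hC3', hC4, hC5, hC6', hC7]
  -- putting everything together
  have hsplit : (∫ z in Metric.ball (0:ℂ) R, CGW_Gf p ω ω' f F z)
      = (∫ z in Metric.ball (0:ℂ) R, CGW_G p ω f F z)
        + ∫ z in Metric.ball (0:ℂ) R, ((‖z‖^2 * ‖f z‖^p * ω' (‖z‖^2) : ℝ):ℂ) := by
    unfold CGW_Gf
    exact integral_add hGint hcorrint
  have hY : (∫ z in Metric.ball (0:ℂ) R, ((‖z‖^2 * ‖f z‖^p * ω' (‖z‖^2) : ℝ):ℂ))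
      = ((∫ z in Metric.ball (0:ℂ) R, ‖z‖^2 * ‖f z‖^p * ω' (‖z‖^2) : ℝ) : ℂ) :=
    integral_ofReal
  rw [hstep1, Complex.ofReal_sub, ← hmain, hsplit, hY]
  ring
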